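/- arXiv:2108.03804 — 2 statements merged into one kernel-verified Lean document; each statement's English description precedes it below -/
import Mathlib

section
/- Let D = [0, π) × [−R, R] with R > 0 and let B(x_t, t) = {(θ, r) ∈ D : x_t·cos(θ) − t < r < x_t·cos(θ) + t}. If x_t > 0, x_t + t > R and x_t − t ≤ R, then the Lebesgue measure of B(x_t, t) equals 2[πt − x_t·√(1 − ((R − t)/x_t)²) + (R − t)·arccos((R − t)/x_t)]. -/
open Real MeasureTheory

/-- Case 2 of Theorem 1: if x_t + t > R and x_t − t ≤ R (with 0 < t < R, t ≤ x_t), the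
clipped domain band has Lebesgue measure
2[πt − x_t √(1 − ((R−t)/x_t)²) + (R−t) arccos((R−t)/x_t)]. -/
theorem blp_band_area_case2 (R xt t : ℝ) (hR : 0 < R) (ht : 0 < t) (hxt : 0 < xt)
    (htR : t < R) (htxt : t ≤ xt) (hcase1 : R < xt + t) (hcase2 : xt - t ≤ R) :
    volume {p : ℝ × ℝ | p.1 ∈ Set.Ico 0 π ∧ p.2 ∈ Set.Icc (-R) R ∧
      p.2 ∈ Set.Ioo (xt * Real.cos p.1 - t) (xt * Real.cos p.1 + t)} =
      ENNReal.ofReal (2 * (π * t - xt * Real.sqrt (1 - ((R - t) / xt) ^ 2) +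
        (R - t) * Real.arccos ((R - t) / xt))) := by
  have hπ := Real.pi_pos
  set c : ℝ := (R - t) / xt with hc
  have hc0 : 0 < c := div_pos (by linarith) hxt
  have hc1 : c < 1 := (div_lt_one hxt).mpr (by linarith)
  set α : ℝ := Real.arccos c with hαdef
  have hcos : Real.cos α = c := Real.cos_arccos (by linarith) hc1.le
  have hα0 : 0 < α := Real.arccos_pos.mpr hc1
  have hα2 : α < π / 2 := Real.arccos_lt_pi_div_two.mpr hc0
  set f : ℝ → ℝ := fun θ => max (-R) (xt * Real.cos θ - t) with hfdef
  set g : ℝ → ℝ := fun θ => min R (xt * Real.cos θ + t) with hgdef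
  have hfc : Continuous f := continuous_const.max (by continuity)
  have hgc : Continuous g := continuous_const.min (by continuity)
  have hfg : ∀ θ : ℝ, f θ ≤ g θ := by
    intro θ
    have h1 : Real.cos θ ≤ 1 := Real.cos_le_one θ
    have h2 : -1 ≤ Real.cos θ := Real.neg_one_le_cos θ
    have h3 : xt * Real.cos θ ≤ xt := by nlinarith
    have h4 : -xt ≤ xt * Real.cos θ := by nlinarith
    simp only [hfdef, hgdef, max_le_iff, le_min_iff]
    refine ⟨⟨by linarith, by linarith⟩, by linarith, by linarith⟩
  have hN : volume {p : ℝ × ℝ | p.2 = -R ∨ p.2 = R} = 0 := by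
    have hset : {p : ℝ × ℝ | p.2 = -R ∨ p.2 = R} = Set.univ ×ˢ ({-R, R} : Set ℝ) := by
      ext p; simp
    have h2 : volume ({-R, R} : Set ℝ) = 0 :=
      Set.Countable.measure_zero ((Set.countable_singleton _).insert _) _
    rw [hset, Measure.volume_eq_prod, Measure.prod_prod, h2, mul_zero]
  have hmeq : volume {p : ℝ × ℝ | p.1 ∈ Set.Ico 0 π ∧ p.2 ∈ Set.Icc (-R) R ∧
      p.2 ∈ Set.Ioo (xt * Real.cos p.1 - t) (xt * Real.cos p.1 + t)} =
      volume (regionBetween f g (Set.Ico 0 π)) := by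
    have hBA : regionBetween f g (Set.Ico 0 π) ⊆
        {p : ℝ × ℝ | p.1 ∈ Set.Ico 0 π ∧ p.2 ∈ Set.Icc (-R) R ∧
          p.2 ∈ Set.Ioo (xt * Real.cos p.1 - t) (xt * Real.cos p.1 + t)} := by
      rintro ⟨θ, r⟩ ⟨hθ, hr1, hr2⟩
      have h1 : -R ≤ f θ := le_max_left _ _
      have h2 : xt * Real.cos θ - t ≤ f θ := le_max_right _ _
      have h3 : g θ ≤ R := min_le_left _ _
      have h4 : g θ ≤ xt * Real.cos θ + t := min_le_right _ _
      exact ⟨hθ, ⟨by linarith, by linarith⟩, by linarith, by linarith⟩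
    have hAB : {p : ℝ × ℝ | p.1 ∈ Set.Ico 0 π ∧ p.2 ∈ Set.Icc (-R) R ∧
          p.2 ∈ Set.Ioo (xt * Real.cos p.1 - t) (xt * Real.cos p.1 + t)} ⊆
        regionBetween f g (Set.Ico 0 π) ∪ {p : ℝ × ℝ | p.2 = -R ∨ p.2 = R} := by
      rintro ⟨θ, r⟩ ⟨hθ, ⟨ha1, ha2⟩, hb1, hb2⟩
      by_cases h1 : f θ < r
      · by_cases h2 : r < g θ
        · exact Or.inl ⟨hθ, h1, h2⟩
        · push_neg at h2
          rcases min_le_iff.mp h2 with h | h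
          · exact Or.inr (Or.inr (le_antisymm ha2 h))
          · exact absurd hb2 (not_lt.mpr h)
      · push_neg at h1
        rcases le_max_iff.mp h1 with h | h
        · exact Or.inr (Or.inl (le_antisymm h ha1))
        · exact absurd hb1 (not_lt.mpr h)
    refine le_antisymm ?_ (measure_mono hBA)
    calc volume {p : ℝ × ℝ | p.1 ∈ Set.Ico 0 π ∧ p.2 ∈ Set.Icc (-R) R ∧
          p.2 ∈ Set.Ioo (xt * Real.cos p.1 - t) (xt * Real.cos p.1 + t)}
        ≤ volume (regionBetween f g (Set.Ico 0 π) ∪ {p : ℝ × ℝ | p.2 = -R ∨ p.2 = R}) :=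
          measure_mono hAB
      _ ≤ volume (regionBetween f g (Set.Ico 0 π)) +
            volume {p : ℝ × ℝ | p.2 = -R ∨ p.2 = R} := measure_union_le _ _
      _ = volume (regionBetween f g (Set.Ico 0 π)) := by rw [hN, add_zero]
  rw [hmeq, Measure.volume_eq_prod, volume_regionBetween_eq_integral
    (hfc.integrableOn_Icc.mono_set Set.Ico_subset_Icc_self)
    (hgc.integrableOn_Icc.mono_set Set.Ico_subset_Icc_self)
    measurableSet_Ico (fun θ _ => hfg θ)]
  congr 1
  have hαπ : α ≤ π - α := by linarith
  have hπα : π - α ≤ π := by linarith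
  have hint : ∀ a b : ℝ, IntervalIntegrable (g - f) volume a b :=
    fun a b => (hgc.sub hfc).intervalIntegrable a b
  rw [setIntegral_congr_set Ico_ae_eq_Ioc, ← intervalIntegral.integral_of_le hπ.le,
    ← intervalIntegral.integral_add_adjacent_intervals (hint 0 α) (hint α π),
    ← intervalIntegral.integral_add_adjacent_intervals (hint α (π - α)) (hint (π - α) π)]
  have i1 : ∫ y in (0:ℝ)..α, (g - f) y
      = ∫ y in (0:ℝ)..α, ((R + t) - xt * Real.cos y) := by
    apply intervalIntegral.integral_congr
    intro y hy
    rw [Set.uIcc_of_le hα0.le] at hy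
    obtain ⟨hy0, hyα⟩ := hy
    have hcy : c ≤ Real.cos y := by
      rw [← hcos]; exact Real.cos_le_cos_of_nonneg_of_le_pi hy0 (by linarith) hyα
    have hx : R - t ≤ xt * Real.cos y := by
      have := mul_le_mul_of_nonneg_left hcy hxt.le
      rw [hc] at this
      calc R - t = xt * ((R - t) / xt) := by field_simp
        _ ≤ xt * Real.cos y := this
    simp only [Pi.sub_apply, hfdef, hgdef]
    rw [min_eq_left (by linarith), max_eq_right (by linarith)]
    ring
  have i2 : ∫ y in α..(π - α), (g - f) y = ∫ y in α..(π - α), (2 * t : ℝ) := by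
    apply intervalIntegral.integral_congr
    intro y hy
    rw [Set.uIcc_of_le hαπ] at hy
    obtain ⟨hy1, hy2⟩ := hy
    have hcy1 : Real.cos y ≤ c := by
      rw [← hcos]; exact Real.cos_le_cos_of_nonneg_of_le_pi hα0.le (by linarith) hy1
    have hcy2 : -c ≤ Real.cos y := by
      have := Real.cos_le_cos_of_nonneg_of_le_pi (by linarith : (0:ℝ) ≤ y) hπα hy2
      rwa [Real.cos_pi_sub, hcos] at this
    have hx1 : xt * Real.cos y ≤ R - t := by
      have := mul_le_mul_of_nonneg_left hcy1 hxt.le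
      calc xt * Real.cos y ≤ xt * ((R - t) / xt) := by rw [← hc]; exact this
        _ = R - t := by field_simp
    have hx2 : -(R - t) ≤ xt * Real.cos y := by
      have := mul_le_mul_of_nonneg_left hcy2 hxt.le
      calc -(R - t) = xt * (-((R - t) / xt)) := by field_simp
        _ ≤ xt * Real.cos y := by rw [← hc]; exact this
    simp only [Pi.sub_apply, hfdef, hgdef]
    rw [min_eq_right (by linarith), max_eq_right (by linarith)]
    ring
  have i3 : ∫ y in (π - α)..π, (g - f) y
      = ∫ y in (π - α)..π, (xt * Real.cos y + t + R) := by
    apply intervalIntegral.integral_congr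
    intro y hy
    rw [Set.uIcc_of_le hπα] at hy
    obtain ⟨hy1, hy2⟩ := hy
    have hcy : Real.cos y ≤ -c := by
      have := Real.cos_le_cos_of_nonneg_of_le_pi (by linarith : (0:ℝ) ≤ π - α) hy2 hy1
      rwa [Real.cos_pi_sub, hcos] at this
    have hx : xt * Real.cos y ≤ -(R - t) := by
      have := mul_le_mul_of_nonneg_left hcy hxt.le
      calc xt * Real.cos y ≤ xt * (-((R - t) / xt)) := by rw [← hc]; exact this
        _ = -(R - t) := by field_simp
    simp only [Pi.sub_apply, hfdef, hgdef]
    rw [min_eq_right (by linarith), max_eq_left (by linarith)]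
    ring
  have j1 : ∫ y in (0:ℝ)..α, ((R + t) - xt * Real.cos y)
      = (R + t) * α - xt * Real.sin α := by
    rw [intervalIntegral.integral_sub (g := fun y => xt * Real.cos y) intervalIntegrable_const
      ((continuous_const.mul Real.continuous_cos).intervalIntegrable _ _),
      intervalIntegral.integral_const, intervalIntegral.integral_const_mul,
      integral_cos]
    simp; ring
  have j2 : ∫ y in α..(π - α), (2 * t : ℝ) = 2 * t * (π - 2 * α) := by
    rw [intervalIntegral.integral_const]; simp; ring
  have j3 : ∫ y in (π - α)..π, (xt * Real.cos y + t + R)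
      = (t + R) * α - xt * Real.sin α := by
    rw [intervalIntegral.integral_add (f := fun y => xt * Real.cos y + t)
      (((continuous_const.mul Real.continuous_cos).add continuous_const).intervalIntegrable _ _)
      intervalIntegrable_const,
      intervalIntegral.integral_add (f := fun y => xt * Real.cos y)
      ((continuous_const.mul Real.continuous_cos).intervalIntegrable _ _)
      intervalIntegrable_const,
      intervalIntegral.integral_const, intervalIntegral.integral_const_mul,
      integral_cos, Real.sin_pi, Real.sin_pi_sub]
    simp; ring
  have hsin : Real.sin α = Real.sqrt (1 - c ^ 2) := Real.sin_arccos c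
  rw [i1, i2, i3, j1, j2, j3, hsin]
  ring
end

section
/- Let D = [0, π) × [−R, R] with R > 0 and let B(x_t, t) = {(θ, r) ∈ D : x_t·cos(θ) − t < r < x_t·cos(θ) + t}. If x_t > 0 and x_t − t > R, then the Lebesgue measure of B(x_t, t) equals 2[πt − x_t(√(1 − ((R − t)/x_t)²) − √(1 − ((R + t)/x_t)²)) + (R − t)·arccos((R − t)/x_t) − (R + t)·arccos((R + t)/x_t)]. -/
open Real MeasureTheory

lemma ofReal_max_zero' (x : ℝ) : ENNReal.ofReal x = ENNReal.ofReal (max x 0) := by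
  rcases le_total x 0 with h | h
  · rw [max_eq_right h, ENNReal.ofReal_zero, ENNReal.ofReal_eq_zero.mpr h]
  · rw [max_eq_left h]

/-- Case 3 of Theorem 1: if x_t − t > R (with 0 < t < R), the clipped domain band has
Lebesgue measure
2[πt − x_t(√(1 − ((R−t)/x_t)²) − √(1 − ((R+t)/x_t)²)) + (R−t) arccos((R−t)/x_t)
  − (R+t) arccos((R+t)/x_t)]. -/
theorem blp_band_area_case3 (R xt t : ℝ) (hR : 0 < R) (ht : 0 < t) (hxt : 0 < xt)
    (htR : t < R) (hcase : R < xt - t) :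
    volume {p : ℝ × ℝ | p.1 ∈ Set.Ico 0 π ∧ p.2 ∈ Set.Icc (-R) R ∧
      p.2 ∈ Set.Ioo (xt * Real.cos p.1 - t) (xt * Real.cos p.1 + t)} =
      ENNReal.ofReal (2 * (π * t -
        xt * (Real.sqrt (1 - ((R - t) / xt) ^ 2) - Real.sqrt (1 - ((R + t) / xt) ^ 2)) +
        (R - t) * Real.arccos ((R - t) / xt) -
        (R + t) * Real.arccos ((R + t) / xt))) := by
  have hxt' : R + t < xt := by linarith
  set p : ℝ := (R + t) / xt with hpdef
  set q : ℝ := (R - t) / xt with hqdef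
  have hp0 : 0 < p := div_pos (by linarith) hxt
  have hp1 : p < 1 := (div_lt_one hxt).mpr hxt'
  have hq0 : 0 < q := div_pos (by linarith) hxt
  have hqp : q < p := by
    rw [hpdef, hqdef, div_lt_div_iff₀ hxt hxt]
    nlinarith
  have hq1 : q < 1 := hqp.trans hp1
  have hxtp : xt * p = R + t := by rw [hpdef]; field_simp
  have hxtq : xt * q = R - t := by rw [hqdef]; field_simp
  set a : ℝ := Real.arccos p with hadef
  set b : ℝ := Real.arccos q with hbdef
  have hcos_a : Real.cos a = p := Real.cos_arccos (by linarith) hp1.le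
  have hcos_b : Real.cos b = q := Real.cos_arccos (by linarith) hq1.le
  have ha0 : 0 ≤ a := Real.arccos_nonneg p
  have hb0 : 0 ≤ b := Real.arccos_nonneg q
  have haπ : a ≤ π := Real.arccos_le_pi p
  have hbπ : b ≤ π := Real.arccos_le_pi q
  have hab : a < b := Real.strictAntiOn_arccos ⟨by linarith, hq1.le⟩ ⟨by linarith, hp1.le⟩ hqp
  have hb2 : b < π / 2 := Real.arccos_lt_pi_div_two.mpr hq0
  have hbb : b ≤ π - b := by linarith
  have hsin_a : Real.sin a = Real.sqrt (1 - p ^ 2) := Real.sin_arccos p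
  have hsin_b : Real.sin b = Real.sqrt (1 - q ^ 2) := Real.sin_arccos q
  set f : ℝ → ℝ := fun θ => max (-R) (xt * Real.cos θ - t) with hfdef
  set g : ℝ → ℝ := fun θ => min R (xt * Real.cos θ + t) with hgdef
  have hfc : Continuous f :=
    continuous_const.max ((continuous_const.mul Real.continuous_cos).sub continuous_const)
  have hgc : Continuous g :=
    continuous_const.min ((continuous_const.mul Real.continuous_cos).add continuous_const)
  set h : ℝ → ℝ := fun θ => max (g θ - f θ) 0 with hhdef
  have hhc : Continuous h := (hgc.sub hfc).max continuous_const
  -- Step A: a.e. equality with regionBetween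
  have hae : volume {p : ℝ × ℝ | p.1 ∈ Set.Ico 0 π ∧ p.2 ∈ Set.Icc (-R) R ∧
      p.2 ∈ Set.Ioo (xt * Real.cos p.1 - t) (xt * Real.cos p.1 + t)} =
      volume (regionBetween f g (Set.Ico 0 π)) := by
    apply measure_congr
    rw [MeasureTheory.ae_eq_set]
    constructor
    · refine measure_mono_null (t := (Set.univ : Set ℝ) ×ˢ ({-R, R} : Set ℝ)) ?_ ?_
      · rintro ⟨θ, r⟩ ⟨⟨hθ, ⟨hr1, hr2⟩, ⟨hr3, hr4⟩⟩, hnot⟩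
        simp only [regionBetween, Set.mem_setOf_eq, Set.mem_Ioo, not_and, not_lt,
          hfdef, hgdef] at hnot
        refine ⟨trivial, ?_⟩
        simp only [Set.mem_insert_iff, Set.mem_singleton_iff]
        by_contra hcon
        push_neg at hcon
        obtain ⟨hne1, hne2⟩ := hcon
        have h1 : max (-R) (xt * Real.cos θ - t) < r :=
          max_lt (lt_of_le_of_ne hr1 (Ne.symm hne1)) hr3
        have h2 := hnot hθ h1
        exact absurd (lt_min (lt_of_le_of_ne hr2 hne2) hr4) (not_lt.mpr h2)
      · rw [MeasureTheory.Measure.volume_eq_prod, Measure.prod_prod]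
        have hz : volume ({-R, R} : Set ℝ) = 0 :=
          (Set.toFinite _).measure_zero _
        rw [hz, mul_zero]
    · have hsub : regionBetween f g (Set.Ico 0 π) ⊆
        {p : ℝ × ℝ | p.1 ∈ Set.Ico 0 π ∧ p.2 ∈ Set.Icc (-R) R ∧
          p.2 ∈ Set.Ioo (xt * Real.cos p.1 - t) (xt * Real.cos p.1 + t)} := by
        rintro ⟨θ, r⟩ ⟨hθ, hr⟩
        refine ⟨hθ, ⟨?_, ?_⟩, ?_, ?_⟩
        · exact (le_max_left (-R) _).trans hr.1.le
        · exact hr.2.le.trans (min_le_left R _)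
        · exact (le_max_right _ _).trans_lt hr.1
        · exact hr.2.trans_le (min_le_right _ _)
      rw [Set.diff_eq_empty.mpr hsub]
      exact measure_empty
  rw [hae, MeasureTheory.Measure.volume_eq_prod, volume_regionBetween_eq_lintegral
    (hfc.aemeasurable.restrict) (hgc.aemeasurable.restrict) measurableSet_Ico]
  -- Step C: replace with nonneg integrand
  have hC : ∫⁻ θ in Set.Ico 0 π, ENNReal.ofReal ((g - f) θ) =
      ∫⁻ θ in Set.Ico 0 π, ENNReal.ofReal (h θ) := by
    apply lintegral_congr
    intro θ
    exact ofReal_max_zero' _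
  rw [hC]
  -- Step D: lintegral to integral
  have hint : IntegrableOn h (Set.Ico 0 π) volume := by
    apply (hhc.integrableOn_Icc (a := 0) (b := π)).mono_set Set.Ico_subset_Icc_self
  rw [← ofReal_integral_eq_lintegral_ofReal hint
    (Filter.Eventually.of_forall fun θ => le_max_right _ _)]
  congr 1
  -- Step E: compute the integral
  rw [MeasureTheory.setIntegral_congr_set (Ico_ae_eq_Ioc (a := (0:ℝ)) (b := π)),
    ← intervalIntegral.integral_of_le Real.pi_pos.le]
  have hii : ∀ u v : ℝ, IntervalIntegrable h volume u v := fun u v =>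
    hhc.intervalIntegrable u v
  have e1 : ∫ θ in (0:ℝ)..π, h θ = (∫ θ in (0:ℝ)..a, h θ) + ∫ θ in a..π, h θ :=
    (intervalIntegral.integral_add_adjacent_intervals (hii 0 a) (hii a π)).symm
  have e2 : ∫ θ in a..π, h θ = (∫ θ in a..b, h θ) + ∫ θ in b..π, h θ :=
    (intervalIntegral.integral_add_adjacent_intervals (hii a b) (hii b π)).symm
  have e3 : ∫ θ in b..π, h θ = (∫ θ in b..(π - b), h θ) + ∫ θ in (π - b)..π, h θ :=
    (intervalIntegral.integral_add_adjacent_intervals (hii b (π - b)) (hii (π - b) π)).symm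
  have e4 : ∫ θ in (π - b)..π, h θ =
      (∫ θ in (π - b)..(π - a), h θ) + ∫ θ in (π - a)..π, h θ :=
    (intervalIntegral.integral_add_adjacent_intervals (hii (π - b) (π - a)) (hii (π - a) π)).symm
  rw [e1, e2, e3, e4]
  -- cos bounds helpers
  have cos_ge : ∀ {u θ : ℝ}, 0 ≤ θ → u ≤ π → θ ≤ u → Real.cos u ≤ Real.cos θ :=
    fun hθ hu hθu => Real.cos_le_cos_of_nonneg_of_le_pi hθ hu hθu
  -- Piece 1 : zero on [0, a]
  have I1 : ∫ θ in (0:ℝ)..a, h θ = 0 := by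
    rw [intervalIntegral.integral_congr (g := fun _ => (0:ℝ))]
    · simp
    · intro θ hθ
      rw [Set.uIcc_of_le ha0] at hθ
      have hc : p ≤ Real.cos θ := hcos_a ▸ cos_ge hθ.1 haπ hθ.2
      have hxc : R + t ≤ xt * Real.cos θ := by
        rw [← hxtp]; exact mul_le_mul_of_nonneg_left hc hxt.le
      have hgle : g θ ≤ R := min_le_left _ _
      have hfge : xt * Real.cos θ - t ≤ f θ := le_max_right _ _
      simp only [hhdef]
      exact max_eq_right (by simp only [hfdef, hgdef]; nlinarith [min_le_left R (xt * Real.cos θ + t), le_max_right (-R) (xt * Real.cos θ - t)])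
  -- Piece 2 : R + t - xt cos θ on [a, b]
  have I2 : ∫ θ in a..b, h θ = (R + t) * (b - a) - xt * (Real.sin b - Real.sin a) := by
    rw [intervalIntegral.integral_congr (g := fun θ => (R + t) - xt * Real.cos θ)]
    · rw [intervalIntegral.integral_sub intervalIntegrable_const
        ((by fun_prop : Continuous fun x => xt * Real.cos x).intervalIntegrable a b)]
      rw [intervalIntegral.integral_const, intervalIntegral.integral_const_mul, integral_cos]
      simp [smul_eq_mul, mul_comm]
    · intro θ hθ
      rw [Set.uIcc_of_le hab.le] at hθ
      have hcu : Real.cos θ ≤ p := hcos_a ▸ cos_ge ha0 (hθ.2.trans hbπ) hθ.1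
      have hcl : q ≤ Real.cos θ := hcos_b ▸ cos_ge (ha0.trans hθ.1) hbπ hθ.2
      have hxu : xt * Real.cos θ ≤ R + t := by
        rw [← hxtp]; exact mul_le_mul_of_nonneg_left hcu hxt.le
      have hxl : R - t ≤ xt * Real.cos θ := by
        rw [← hxtq]; exact mul_le_mul_of_nonneg_left hcl hxt.le
      have hg : g θ = R := min_eq_left (by linarith)
      have hf : f θ = xt * Real.cos θ - t := max_eq_right (by linarith)
      simp only [hhdef, hg, hf]
      rw [max_eq_left (by linarith)]
      ring
  -- Piece 3 : constant 2t on [b, π - b]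
  have I3 : ∫ θ in b..(π - b), h θ = 2 * t * (π - 2 * b) := by
    rw [intervalIntegral.integral_congr (g := fun _ => 2 * t)]
    · rw [intervalIntegral.integral_const]
      simp only [smul_eq_mul]
      ring
    · intro θ hθ
      rw [Set.uIcc_of_le hbb] at hθ
      have hcu : Real.cos θ ≤ q := hcos_b ▸ cos_ge hb0 (by linarith [hθ.2]) hθ.1
      have hcl : -q ≤ Real.cos θ := by
        have := cos_ge (hb0.trans hθ.1) (by linarith : π - b ≤ π) hθ.2
        rwa [Real.cos_pi_sub, hcos_b] at this
      have hxu : xt * Real.cos θ ≤ R - t := by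
        rw [← hxtq]; exact mul_le_mul_of_nonneg_left hcu hxt.le
      have hxl : -(R - t) ≤ xt * Real.cos θ := by
        rw [← hxtq, ← mul_neg]; exact mul_le_mul_of_nonneg_left hcl hxt.le
      have hg : g θ = xt * Real.cos θ + t := min_eq_right (by linarith)
      have hf : f θ = xt * Real.cos θ - t := max_eq_right (by linarith)
      simp only [hhdef, hg, hf]
      rw [max_eq_left (by linarith)]
      ring
  -- Piece 4 : xt cos θ + t + R on [π - b, π - a]
  have I4 : ∫ θ in (π - b)..(π - a), h θ =
      (R + t) * (b - a) - xt * (Real.sin b - Real.sin a) := by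
    rw [intervalIntegral.integral_congr (g := fun θ => xt * Real.cos θ + (t + R))]
    · rw [intervalIntegral.integral_add ((by fun_prop : Continuous fun x => xt * Real.cos x).intervalIntegrable _ _)
        intervalIntegrable_const]
      rw [intervalIntegral.integral_const_mul, integral_cos, intervalIntegral.integral_const]
      simp only [smul_eq_mul, Real.sin_pi_sub]
      ring
    · intro θ hθ
      rw [Set.uIcc_of_le (by linarith : π - b ≤ π - a)] at hθ
      have hcu : Real.cos θ ≤ -q := by
        have := cos_ge (by linarith : (0:ℝ) ≤ π - b) (by linarith [hθ.2] : θ ≤ π) hθ.1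
        rwa [Real.cos_pi_sub, hcos_b] at this
      have hcl : -p ≤ Real.cos θ := by
        have := cos_ge (by linarith [hθ.1] : 0 ≤ θ) (by linarith : π - a ≤ π) hθ.2
        rwa [Real.cos_pi_sub, hcos_a] at this
      have hxu : xt * Real.cos θ ≤ -(R - t) := by
        rw [← hxtq, ← mul_neg]; exact mul_le_mul_of_nonneg_left hcu hxt.le
      have hxl : -(R + t) ≤ xt * Real.cos θ := by
        rw [← hxtp, ← mul_neg]; exact mul_le_mul_of_nonneg_left hcl hxt.le
      have hg : g θ = xt * Real.cos θ + t := min_eq_right (by linarith)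
      have hf : f θ = -R := max_eq_left (by linarith)
      simp only [hhdef, hg, hf]
      rw [max_eq_left (by linarith)]
      ring
  -- Piece 5 : zero on [π - a, π]
  have I5 : ∫ θ in (π - a)..π, h θ = 0 := by
    rw [intervalIntegral.integral_congr (g := fun _ => (0:ℝ))]
    · simp
    · intro θ hθ
      rw [Set.uIcc_of_le (by linarith : π - a ≤ π)] at hθ
      have hcu : Real.cos θ ≤ -p := by
        have := cos_ge (by linarith : (0:ℝ) ≤ π - a) hθ.2 hθ.1
        rwa [Real.cos_pi_sub, hcos_a] at this
      have hxu : xt * Real.cos θ ≤ -(R + t) := by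
        rw [← hxtp, ← mul_neg]; exact mul_le_mul_of_nonneg_left hcu hxt.le
      simp only [hhdef]
      apply max_eq_right
      have hgle : g θ ≤ xt * Real.cos θ + t := min_le_right _ _
      have hfge : (-R : ℝ) ≤ f θ := le_max_left _ _
      linarith
  rw [I1, I2, I3, I4, I5, hsin_a, hsin_b]
  ring
end
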